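/- For all Jσ, Jτ, Jστ ∈ ℝ and all σi, σj, τi, τj ∈ {−1, 1}: exp(Jσ σiσj + Jτ τiτj + Jστ σiσjτiτj) = cosh Jσ · cosh Jτ · cosh Jστ · (1 + stl) · (1 + S σiσj + T τiτj + L σiσjτiτj), where s = tanh Jσ, t = tanh Jτ, l = tanh Jστ, S = (s+tl)/(1+stl), T = (t+sl)/(1+stl), L = (l+st)/(1+stl). -/
import Mathlib

lemma tanh_lt_one' (x : ℝ) : Real.tanh x < 1 := by
  rw [Real.tanh_eq_sinh_div_cosh, div_lt_one (Real.cosh_pos x)]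
  nlinarith [Real.cosh_sub_sinh x, Real.exp_pos (-x)]

lemma neg_one_lt_tanh' (x : ℝ) : -1 < Real.tanh x := by
  rw [Real.tanh_eq_sinh_div_cosh, lt_div_iff₀ (Real.cosh_pos x)]
  nlinarith [Real.cosh_add_sinh x, Real.exp_pos x]

lemma stl_pos (a b c : ℝ) : 0 < 1 + Real.tanh a * Real.tanh b * Real.tanh c := by
  have ha1 := tanh_lt_one' a
  have ha2 := neg_one_lt_tanh' a
  have hb1 := tanh_lt_one' b
  have hb2 := neg_one_lt_tanh' b
  have hc1 := tanh_lt_one' c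
  have hc2 := neg_one_lt_tanh' c
  nlinarith [mul_self_nonneg (Real.tanh a * Real.tanh b),
    mul_self_nonneg (Real.tanh a + Real.tanh b), mul_self_nonneg (Real.tanh a - Real.tanh b)]

lemma hfac (J ε : ℝ) (h : ε = 1 ∨ ε = -1) :
    Real.exp (J * ε) = Real.cosh J * (1 + Real.tanh J * ε) := by
  have hc := (Real.cosh_pos J).ne'
  rcases h with rfl | rfl
  · rw [Real.tanh_eq_sinh_div_cosh, mul_one, mul_one, mul_add, mul_one,
      mul_div_cancel₀ _ hc, Real.cosh_add_sinh]
  · rw [Real.tanh_eq_sinh_div_cosh, mul_neg_one]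
    field_simp
    nlinarith [Real.cosh_sub_sinh J]

lemma key (Jσ Jτ Jστ a b : ℝ) (ha : a = 1 ∨ a = -1) (hb : b = 1 ∨ b = -1) :
    Real.exp (Jσ * a + Jτ * b + Jστ * (a * b)) =
      Real.cosh Jσ * Real.cosh Jτ * Real.cosh Jστ *
        (1 + Real.tanh Jσ * Real.tanh Jτ * Real.tanh Jστ) *
        (1 +
          (Real.tanh Jσ + Real.tanh Jτ * Real.tanh Jστ) /
            (1 + Real.tanh Jσ * Real.tanh Jτ * Real.tanh Jστ) * a +
          (Real.tanh Jτ + Real.tanh Jσ * Real.tanh Jστ) /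
            (1 + Real.tanh Jσ * Real.tanh Jτ * Real.tanh Jστ) * b +
          (Real.tanh Jστ + Real.tanh Jσ * Real.tanh Jτ) /
            (1 + Real.tanh Jσ * Real.tanh Jτ * Real.tanh Jστ) * (a * b)) := by
  have hne : (1 + Real.tanh Jσ * Real.tanh Jτ * Real.tanh Jστ) ≠ 0 :=
    ne_of_gt (stl_pos Jσ Jτ Jστ)
  have hab : a * b = 1 ∨ a * b = -1 := by
    rcases ha with rfl | rfl <;> rcases hb with rfl | rfl <;> norm_num
  have ha2 : a * a = 1 := by rcases ha with rfl | rfl <;> norm_num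
  have hb2 : b * b = 1 := by rcases hb with rfl | rfl <;> norm_num
  rw [Real.exp_add, Real.exp_add, hfac Jσ a ha, hfac Jτ b hb, hfac Jστ (a * b) hab]
  rcases ha with rfl | rfl <;> rcases hb with rfl | rfl <;> field_simp <;> ring

/-- the per-bond high-temperature decomposition of the Ashkin–Teller
Boltzmann weight:
`exp(Jσ σiσj + Jτ τiτj + Jστ σiσjτiτj)
  = cosh Jσ cosh Jτ cosh Jστ (1+stl)(1 + S σiσj + T τiτj + L σiσjτiτj)`. -/
theorem stmt8 (Jσ Jτ Jστ σi σj τi τj : ℝ)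
    (hσi : σi = 1 ∨ σi = -1) (hσj : σj = 1 ∨ σj = -1)
    (hτi : τi = 1 ∨ τi = -1) (hτj : τj = 1 ∨ τj = -1) :
    Real.exp (Jσ * (σi * σj) + Jτ * (τi * τj) + Jστ * (σi * σj * τi * τj)) =
      Real.cosh Jσ * Real.cosh Jτ * Real.cosh Jστ *
        (1 + Real.tanh Jσ * Real.tanh Jτ * Real.tanh Jστ) *
        (1 +
          (Real.tanh Jσ + Real.tanh Jτ * Real.tanh Jστ) /
            (1 + Real.tanh Jσ * Real.tanh Jτ * Real.tanh Jστ) * (σi * σj) +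
          (Real.tanh Jτ + Real.tanh Jσ * Real.tanh Jστ) /
            (1 + Real.tanh Jσ * Real.tanh Jτ * Real.tanh Jστ) * (τi * τj) +
          (Real.tanh Jστ + Real.tanh Jσ * Real.tanh Jτ) /
            (1 + Real.tanh Jσ * Real.tanh Jτ * Real.tanh Jστ) *
            (σi * σj * τi * τj)) := by
  have ha : σi * σj = 1 ∨ σi * σj = -1 := by
    rcases hσi with rfl | rfl <;> rcases hσj with rfl | rfl <;> norm_num
  have hb : τi * τj = 1 ∨ τi * τj = -1 := by
    rcases hτi with rfl | rfl <;> rcases hτj with rfl | rfl <;> norm_num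
  have h := key Jσ Jτ Jστ (σi * σj) (τi * τj) ha hb
  rw [show σi * σj * τi * τj = σi * σj * (τi * τj) by ring]
  exact h
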